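/- Every infinite group G satisfies cn(G) ≤ w_l(G): if G admits a Hausdorff linear group topology of weight κ, then G satisfies the weak κ⁺-compatibility condition. -/

import Mathlib

open Cardinal TopologicalSpace

universe u

/-- The weight of a topology: the smallest cardinality of a (topological) base. -/
noncomputable def topWeight {X : Type u} (t : TopologicalSpace X) : Cardinal.{u} :=
  sInf {c | ∃ B : Set (Set X), @TopologicalSpace.IsTopologicalBasis X t B ∧ #B = c}

/-- A topology on a group is a linear group topology if it is a group topology having
a neighbourhood base at the identity consisting of open subgroups. -/
def IsLinearGroupTopology {G : Type u} [Group G] (t : TopologicalSpace G) : Prop :=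
  @IsTopologicalGroup G t _ ∧
    ∀ U ∈ @nhds G t 1, ∃ H : Subgroup G, @IsOpen G t (H : Set G) ∧ (H : Set G) ⊆ U

/-- The minimal weight of a Hausdorff linear group topology on `G`. -/
noncomputable def wl (G : Type u) [Group G] : Cardinal.{u} :=
  sInf {c | ∃ t : TopologicalSpace G, IsLinearGroupTopology t ∧ @T2Space G t ∧ topWeight t = c}

/-- A group `G` satisfies the weak `μ`-compatibility condition if for any finite group `F`
and any family of isomorphisms `f i : F ≃* F i` (`i < μ`) onto finite subgroups of `G`,
there are indices `i < j < μ` and a homomorphism `φ` from the subgroup generated by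
`F i ∪ F j` to `F` such that `φ ∘ f i = φ ∘ f j = id`. -/
def WeakCompat (G : Type u) [Group G] (μ : Cardinal.{u}) : Prop :=
  ∀ (F : Type) (_ : Group F) (_ : Finite F)
    (Fs : ∀ o : Ordinal.{u}, o < μ.ord → Subgroup G)
    (f : ∀ o ho, F ≃* Fs o ho),
    ∃ (i j : Ordinal.{u}) (hi : i < μ.ord) (hj : j < μ.ord), i < j ∧
      ∃ φ : (Fs i hi ⊔ Fs j hj : Subgroup G) →* F,
        (∀ x, φ (Subgroup.inclusion le_sup_left (f i hi x)) = x) ∧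
        (∀ x, φ (Subgroup.inclusion le_sup_right (f j hj x)) = x)

/-- The weak compatibility number of `G`: the smallest infinite cardinal `κ` such that `G`
satisfies the weak `κ⁺`-compatibility condition. -/
noncomputable def cn (G : Type u) [Group G] : Cardinal.{u} :=
  sInf {κ | ℵ₀ ≤ κ ∧ WeakCompat G (Order.succ κ)}

lemma key_alg {G : Type u} [Group G] (F : Type) [Group F]
    (H A B : Subgroup G) (fa : F ≃* A) (fb : F ≃* B)
    (hA : ∀ x : F, (fa x : G) ∈ H → x = 1)
    (hd : ∀ x : F, (fa x : G)⁻¹ * (fb x : G) ∈ H) :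
    ∃ φ : (A ⊔ B : Subgroup G) →* F,
      (∀ x, φ (Subgroup.inclusion le_sup_left (fa x)) = x) ∧
      (∀ x, φ (Subgroup.inclusion le_sup_right (fb x)) = x) := by
  -- uniqueness
  have huniq : ∀ (g : G) (x x' : F), (fa x : G)⁻¹ * g ∈ H → (fa x' : G)⁻¹ * g ∈ H → x = x' := by
    intro g x x' h1 h2
    have h3 : (fa (x'⁻¹ * x) : G) ∈ H := by
      have := H.mul_mem h2 (H.inv_mem h1)
      convert this using 1
      rw [map_mul, map_inv]
      push_cast
      group
    have := hA _ h3
    rwa [inv_mul_eq_one, eq_comm] at this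
  -- main invariance property by closure induction
  have hL : ∀ g ∈ (A ⊔ B : Subgroup G), ∃ x : F,
      ∀ y : F, (fa (x * y) : G)⁻¹ * g * (fa y : G) ∈ H := by
    intro g hg
    rw [Subgroup.sup_eq_closure] at hg
    induction hg using Subgroup.closure_induction with
    | mem z hz =>
      rcases hz with hz | hz
      · refine ⟨fa.symm ⟨z, hz⟩, fun y => ?_⟩
        have hz' : (fa (fa.symm ⟨z, hz⟩) : G) = z := by
          rw [fa.apply_symm_apply]
        rw [map_mul]
        push_cast
        rw [hz']
        convert H.one_mem using 1
        group
      · refine ⟨fb.symm ⟨z, hz⟩, fun y => ?_⟩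
        set x := fb.symm ⟨z, hz⟩ with hx
        have hz' : (fb x : G) = z := by rw [hx, fb.apply_symm_apply]
        have := H.mul_mem (hd (x * y)) (H.inv_mem (hd y))
        convert this using 1
        rw [← hz', map_mul fb x y]
        push_cast
        group
    | one =>
      exact ⟨1, fun y => by simpa using H.one_mem⟩
    | mul z w hz hw ihz ihw =>
      obtain ⟨x, hx⟩ := ihz
      obtain ⟨x', hx'⟩ := ihw
      refine ⟨x * x', fun y => ?_⟩
      have := H.mul_mem (hx (x' * y)) (hx' y)
      convert this using 1
      rw [mul_assoc x x' y]
      push_cast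
      group
    | inv z hz ihz =>
      obtain ⟨x, hx⟩ := ihz
      refine ⟨x⁻¹, fun y => ?_⟩
      have := H.inv_mem (hx (x⁻¹ * y))
      convert this using 1
      rw [mul_inv_cancel_left]
      push_cast
      group
  -- the choice function
  have hL' : ∀ k : (A ⊔ B : Subgroup G), ∃ x : F,
      ∀ y : F, (fa (x * y) : G)⁻¹ * (k : G) * (fa y : G) ∈ H := fun k => hL k k.2
  choose c hcspec using hL'
  have hspec : ∀ k : (A ⊔ B : Subgroup G), (fa (c k) : G)⁻¹ * (k : G) ∈ H := by
    intro k
    have := hcspec k 1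
    simpa using this
  have hmul : ∀ k k' : (A ⊔ B : Subgroup G), c (k * k') = c k * c k' := by
    intro k k'
    refine huniq ((k : G) * (k' : G)) _ _ (by simpa using hspec (k * k')) ?_
    have h1 := hcspec k (c k')
    have h2 := hspec k'
    have := H.mul_mem h1 h2
    convert this using 1
    rw [map_mul fa (c k) (c k')]
    push_cast
    group
  refine ⟨MonoidHom.mk' c hmul, fun x => ?_, fun x => ?_⟩
  · refine huniq (fa x : G) _ _ ?_ (by simpa using H.one_mem)
    have := hspec (Subgroup.inclusion le_sup_left (fa x))
    simpa using this
  · refine huniq (fb x : G) _ _ ?_ (hd x)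
    have := hspec (Subgroup.inclusion le_sup_right (fb x))
    simpa using this

lemma aleph0_le_basis {X : Type u} [TopologicalSpace X] [T2Space X] [Infinite X]
    {B : Set (Set X)} (hB : IsTopologicalBasis B) : ℵ₀ ≤ #B := by
  by_contra h
  push_neg at h
  have : Finite B := Cardinal.lt_aleph0_iff_finite.1 h
  have hinj : Function.Injective (fun x : X => {U : B | x ∈ (U : Set X)}) := by
    intro x y hxy
    by_contra hne
    obtain ⟨U, V, hU, hV, hxU, hyV, hUV⟩ := t2_separation hne
    obtain ⟨W, hWB, hxW, hWU⟩ := hB.exists_subset_of_mem_open hxU hU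
    have hxy' : {U : B | x ∈ (U : Set X)} = {U : B | y ∈ (U : Set X)} := hxy
    have hyW : y ∈ W := by
      have : (⟨W, hWB⟩ : B) ∈ {U : B | x ∈ (U : Set X)} := hxW
      rw [hxy'] at this
      exact this
    exact Set.disjoint_left.mp hUV (hWU hyW) hyV
  have : Finite X := Finite.of_injective _ hinj
  exact not_finite X
  
lemma coset_inj {G : Type u} [Group G] [TopologicalSpace G] [IsTopologicalGroup G]
    {B : Set (Set G)} (hB : IsTopologicalBasis B) (H : Subgroup G)
    (hH : IsOpen (H : Set G)) : ∃ c : G ⧸ H → B, Function.Injective c := by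
  have hopen : ∀ q : G ⧸ H, IsOpen {g : G | QuotientGroup.mk g = q} := by
    intro q
    have : {g : G | QuotientGroup.mk g = q} = (fun g => q.out⁻¹ * g) ⁻¹' (H : Set G) := by
      ext g
      simp only [Set.mem_setOf_eq, Set.mem_preimage, SetLike.mem_coe]
      rw [← QuotientGroup.eq, QuotientGroup.out_eq']
      exact eq_comm
    rw [this]
    exact hH.preimage (continuous_const.mul continuous_id)
  have hmem : ∀ q : G ⧸ H, q.out ∈ {g : G | QuotientGroup.mk g = q} := fun q =>
    QuotientGroup.out_eq' q
  have := fun q : G ⧸ H => hB.exists_subset_of_mem_open (hmem q) (hopen q)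
  choose U hUB hqU hUsub using this
  refine ⟨fun q => ⟨U q, hUB q⟩, fun q q' hqq' => ?_⟩
  have : U q = U q' := congrArg Subtype.val hqq'
  have : q.out ∈ {g : G | QuotientGroup.mk g = q'} := hUsub q' (this ▸ hqU q)
  rw [← QuotientGroup.out_eq' q]
  exact this

lemma main_compat {G : Type u} [Group G] [Infinite G] [TopologicalSpace G]
    [IsTopologicalGroup G] [T2Space G]
    (hlin : ∀ U ∈ nhds (1 : G), ∃ H : Subgroup G, IsOpen (H : Set G) ∧ (H : Set G) ⊆ U)
    {B : Set (Set G)} (hB : IsTopologicalBasis B) {κ : Cardinal.{u}} (hκ : #B ≤ κ) :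
    WeakCompat G (Order.succ κ) := by
  intro F _ _ Fs f
  have hκ0 : ℵ₀ ≤ κ := le_trans (aleph0_le_basis hB) hκ
  -- a family of open subgroups indexed by B
  have hSB : ∀ U : B, ∃ H : Subgroup G, IsOpen (H : Set G) ∧
      ((1 : G) ∈ (U : Set G) → (H : Set G) ⊆ (U : Set G)) := by
    intro U
    by_cases h1 : (1 : G) ∈ (U : Set G)
    · obtain ⟨H, hHo, hHs⟩ := hlin U ((hB.isOpen U.2).mem_nhds h1)
      exact ⟨H, hHo, fun _ => hHs⟩
    · refine ⟨⊤, ?_, fun h => absurd h h1⟩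
      rw [Subgroup.coe_top]; exact isOpen_univ
  choose SB hSBo hSBs using hSB
  have hbase : ∀ V ∈ nhds (1 : G), ∃ U : B, (SB U : Set G) ⊆ V := by
    intro V hV
    obtain ⟨H0, hH0o, hH0s⟩ := hlin V hV
    obtain ⟨W, hWB, h1W, hWH0⟩ := hB.exists_subset_of_mem_open (H0.one_mem) hH0o
    exact ⟨⟨W, hWB⟩, (hSBs ⟨W, hWB⟩ h1W).trans (hWH0.trans hH0s)⟩
  -- injections from coset spaces into B
  choose cquot hcinj using fun U : B => coset_inj hB (SB U) (hSBo U)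
  -- the index type
  haveI : IsWellOrder (Order.succ κ).ord.ToType (· < ·) := isWellOrder_lt
  have ho : ∀ a : (Order.succ κ).ord.ToType, Ordinal.typein (α := (Order.succ κ).ord.ToType) (· < ·) a < (Order.succ κ).ord := fun a =>
    Ordinal.typein_lt_self a
  set o : (Order.succ κ).ord.ToType → Ordinal.{u} := fun a => Ordinal.typein (α := (Order.succ κ).ord.ToType) (· < ·) a
    with ho'
  -- choose neighbourhoods that miss the finite subgroups
  have hV : ∀ a : (Order.succ κ).ord.ToType, ∃ U : B, (SB U : Set G) ⊆ (((Fs (o a) (ho a) : Set G)) \ {1})ᶜ := by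
    intro a
    apply hbase
    haveI : Finite (Fs (o a) (ho a)) := Finite.of_equiv F (f (o a) (ho a)).toEquiv
    have hfin : ((Fs (o a) (ho a) : Set G) \ {1}).Finite :=
      ((Fs (o a) (ho a) : Set G).toFinite).diff
    refine IsOpen.mem_nhds hfin.isClosed.isOpen_compl ?_
    simp
  choose Ua hUa using hV
  -- the pigeonhole data
  set data : (Order.succ κ).ord.ToType → B × (F → B) := fun a =>
    (Ua a, fun x => cquot (Ua a) (QuotientGroup.mk (f (o a) (ho a) x : G))) with hdata
  -- it cannot be injective
  have hnotinj : ¬ Function.Injective data := by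
    intro hinj
    have h1 : #(Order.succ κ).ord.ToType = Order.succ κ := by rw [Cardinal.mk_toType, Cardinal.card_ord]
    have h2 : #(B × (F → B)) ≤ κ := by
      rw [Cardinal.mk_prod, Cardinal.lift_id, Cardinal.lift_id]
      have hF : #(F → B) ≤ κ := by
        obtain ⟨n, hn⟩ := Cardinal.lt_aleph0.1 (Cardinal.lt_aleph0_of_finite F)
        rw [Cardinal.mk_arrow, hn, Cardinal.lift_uzero, Cardinal.lift_natCast]
        calc (#B) ^ (n : Cardinal.{u}) ≤ κ ^ (n : Cardinal.{u}) :=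
              Cardinal.power_le_power_right hκ
          _ = κ ^ n := Cardinal.power_natCast κ n
          _ ≤ κ := Cardinal.power_nat_le hκ0
      calc #B * #(F → B) ≤ κ * κ := mul_le_mul' hκ hF
        _ = κ := Cardinal.mul_eq_self hκ0
    have := (Cardinal.mk_le_of_injective hinj).trans h2
    rw [h1] at this
    exact absurd this (not_le.mpr (Order.lt_succ κ))
  rw [Function.not_injective_iff] at hnotinj
  obtain ⟨a, b, hdab, hab⟩ := hnotinj
  -- WLOG abstraction
  have main : ∀ a b : (Order.succ κ).ord.ToType, data a = data b → o a < o b →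
      ∃ (i j : Ordinal.{u}) (hi : i < (Order.succ κ).ord) (hj : j < (Order.succ κ).ord), i < j ∧
      ∃ φ : (Fs i hi ⊔ Fs j hj : Subgroup G) →* F,
        (∀ x, φ (Subgroup.inclusion le_sup_left (f i hi x)) = x) ∧
        (∀ x, φ (Subgroup.inclusion le_sup_right (f j hj x)) = x) := by
    clear hdab hab a b
    intro a b hdab hlt
    have hU : Ua a = Ua b := congrArg Prod.fst hdab
    have hfun : ∀ x : F, cquot (Ua a) (QuotientGroup.mk (f (o a) (ho a) x : G)) =
        cquot (Ua b) (QuotientGroup.mk (f (o b) (ho b) x : G)) := fun x =>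
      congrFun (congrArg Prod.snd hdab) x
    rw [← hU] at hfun
    have hmk : ∀ x : F, (QuotientGroup.mk (f (o a) (ho a) x : G) : G ⧸ SB (Ua a)) =
        QuotientGroup.mk (f (o b) (ho b) x : G) := fun x => hcinj (Ua a) (hfun x)
    have hd : ∀ x : F, ((f (o a) (ho a) x : G))⁻¹ * (f (o b) (ho b) x : G) ∈ SB (Ua a) :=
      fun x => QuotientGroup.eq.mp (hmk x)
    have hA : ∀ x : F, (f (o a) (ho a) x : G) ∈ SB (Ua a) → x = 1 := by
      intro x hx
      have h1 := hUa a hx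
      simp only [Set.mem_compl_iff, Set.mem_diff, Set.mem_singleton_iff, not_and, not_not] at h1
      have h2 : (f (o a) (ho a) x : G) = 1 := h1 (f (o a) (ho a) x).2
      have : f (o a) (ho a) x = 1 := Subtype.ext h2
      apply (f (o a) (ho a)).injective
      rw [this, map_one]
    exact ⟨o a, o b, ho a, ho b, hlt,
      key_alg F (SB (Ua a)) (Fs (o a) (ho a)) (Fs (o b) (ho b))
        (f (o a) (ho a)) (f (o b) (ho b)) hA hd⟩
  rcases lt_trichotomy (o a) (o b) with h | h | h
  · exact main a b hdab h
  · exact absurd (Ordinal.typein_injective _ h) hab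
  · exact main b a hdab.symm h
lemma topWeight_has_basis {X : Type u} (t : TopologicalSpace X) :
    ∃ B : Set (Set X), @IsTopologicalBasis X t B ∧ #B = topWeight t := by
  have hne : {c | ∃ B : Set (Set X), @IsTopologicalBasis X t B ∧ #B = c}.Nonempty :=
    ⟨_, {U | @IsOpen X t U}, @isTopologicalBasis_opens X t, rfl⟩
  exact csInf_mem hne

lemma part2 (G : Type u) [Group G] [Infinite G] (t : TopologicalSpace G)
    (h1 : IsLinearGroupTopology t) (h2 : @T2Space G t)
    (κ : Cardinal.{u}) (hκ : topWeight t = κ) : WeakCompat G (Order.succ κ) := by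
  letI := t
  haveI : IsTopologicalGroup G := h1.1
  haveI : T2Space G := h2
  obtain ⟨B, hB, hBc⟩ := topWeight_has_basis t
  exact main_compat h1.2 hB (le_of_eq (hBc.trans hκ))

/-- Every infinite group `G` satisfies `cn G ≤ wl G`: if `G` admits a Hausdorff linear group
topology of weight `κ`, then `G` satisfies the weak `κ⁺`-compatibility condition. -/
theorem cn_le_wl (G : Type u) [Group G] [Infinite G] :
    cn G ≤ wl G ∧
    ∀ (t : TopologicalSpace G), IsLinearGroupTopology t → @T2Space G t →
      ∀ κ : Cardinal.{u}, topWeight t = κ → WeakCompat G (Order.succ κ) := by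
  refine ⟨?_, fun t h1 h2 κ hκ => part2 G t h1 h2 κ hκ⟩
  have hbotlin : IsLinearGroupTopology (⊥ : TopologicalSpace G) := by
    letI : TopologicalSpace G := ⊥
    haveI : DiscreteTopology G := ⟨rfl⟩
    refine ⟨{ continuous_mul := continuous_of_discreteTopology,
              continuous_inv := continuous_of_discreteTopology }, ?_⟩
    intro U hU
    exact ⟨⊥, isOpen_discrete _, by simpa [Subgroup.coe_bot] using mem_of_mem_nhds hU⟩
  have hbott2 : @T2Space G ⊥ := by
    letI : TopologicalSpace G := ⊥
    haveI : DiscreteTopology G := ⟨rfl⟩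
    infer_instance
  have hne : {c | ∃ t : TopologicalSpace G, IsLinearGroupTopology t ∧ @T2Space G t ∧
      topWeight t = c}.Nonempty := ⟨topWeight ⊥, ⊥, hbotlin, hbott2, rfl⟩
  obtain ⟨t, h1, h2, hw⟩ : ∃ t : TopologicalSpace G, IsLinearGroupTopology t ∧ @T2Space G t ∧
      topWeight t = wl G := csInf_mem hne
  have hcompat := part2 G t h1 h2 (wl G) hw
  have hinf : ℵ₀ ≤ wl G := by
    letI := t
    haveI : T2Space G := h2
    obtain ⟨B, hB, hBc⟩ := topWeight_has_basis t
    calc ℵ₀ ≤ #B := aleph0_le_basis hB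
      _ = wl G := hBc.trans hw
  exact csInf_le' ⟨hinf, hcompat⟩
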